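/- Let λ, μ, A, B be real numbers, let ξ¹, ξ² ∈ ℝ³ be linearly independent, and set ξ^P = ξ¹ + ξ². For w ∈ ℝ³ define the scalar k(w) = (λ + 2B)·[|ξ¹|²·(ξ^P·ξ²)·(ξ^P·w) + (ξ¹·ξ²)·(ξ¹·w)·|ξ^P|²] + (3μ + A)·[(ξ^P·ξ²)·(ξ¹·ξ^P)·(ξ¹·w) + (ξ^P·w)·(ξ¹·ξ^P)·(ξ¹·ξ²)] (this is |ξ^P|² times the w-component of the P-mode principal symbol generated by the interaction of a P wave with covector ξ¹ and an in-plane polarized S wave with covector ξ², as computed in the paper). Let w ∈ ℝ³ be a unit vector in the plane spanned by ξ¹ and ξ² with w·ξ² = 0 and w·ξ¹ ≥ 0, and define the angles α = arccos((ξ¹·ξ²)/(|ξ¹||ξ²|)) and ψ = arccos((ξ^P·ξ²)/(|ξ^P||ξ²|)). Then k(w) = (λ + 2B + 3μ + A)·|ξ¹|²·|ξ²|·|ξ^P|²·cos(α − ψ)·sin(α + ψ). (The P-wave output of the P–SH interaction; it is generically nonvanishing exactly when λ + 2B + 3μ + A ≠ 0.) -/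

import Mathlib

open Real

/-- Euclidean dot product on ℝ³. -/
def dot (x y : Fin 3 → ℝ) : ℝ := ∑ i, x i * y i

/-- Euclidean norm on ℝ³. -/
noncomputable def nrm (x : Fin 3 → ℝ) : ℝ := Real.sqrt (dot x x)

/-- |ξ^P|² times the w-component of the P-mode principal symbol generated by the
interaction of a P wave with covector ξ¹ and an in-plane polarized S wave with
covector ξ². -/
def kPSP (lam mu A B : ℝ) (ξ1 ξ2 w : Fin 3 → ℝ) : ℝ :=
  (lam + 2 * B) * (dot ξ1 ξ1 * dot (ξ1 + ξ2) ξ2 * dot (ξ1 + ξ2) w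
      + dot ξ1 ξ2 * dot ξ1 w * dot (ξ1 + ξ2) (ξ1 + ξ2))
    + (3 * mu + A) * (dot (ξ1 + ξ2) ξ2 * dot ξ1 (ξ1 + ξ2) * dot ξ1 w
      + dot (ξ1 + ξ2) w * dot ξ1 (ξ1 + ξ2) * dot ξ1 ξ2)

lemma dot_comm' (x y : Fin 3 → ℝ) : dot x y = dot y x := by
  simp [dot, Fin.sum_univ_three]; ring

lemma dot_add_left (x y z : Fin 3 → ℝ) : dot (x + y) z = dot x z + dot y z := by
  simp [dot, Fin.sum_univ_three]; ring

lemma dot_add_right (x y z : Fin 3 → ℝ) : dot x (y + z) = dot x y + dot x z := by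
  simp [dot, Fin.sum_univ_three]; ring

lemma dot_smul_left (a : ℝ) (x y : Fin 3 → ℝ) : dot (a • x) y = a * dot x y := by
  simp [dot, Fin.sum_univ_three]; ring

lemma dot_self_nonneg (x : Fin 3 → ℝ) : 0 ≤ dot x x := by
  simp only [dot]
  exact Finset.sum_nonneg fun i _ => mul_self_nonneg _

lemma dot_self_pos {x : Fin 3 → ℝ} (hx : x ≠ 0) : 0 < dot x x := by
  rcases (dot_self_nonneg x).lt_or_eq with h | h
  · exact h
  · exfalso; apply hx
    have h0 : ∀ i ∈ (Finset.univ : Finset (Fin 3)), x i * x i = 0 := by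
      intro i hi
      have := (Finset.sum_eq_zero_iff_of_nonneg (fun i _ => mul_self_nonneg (x i))).1 h.symm
      exact this i hi
    funext i
    have := h0 i (Finset.mem_univ i)
    exact mul_self_eq_zero.1 this


set_option maxHeartbeats 1000000 in
/-- The P-wave output of the P–SH interaction. -/
theorem ps_interaction_P_output (lam mu A B : ℝ) (ξ1 ξ2 : Fin 3 → ℝ)
    (hind : LinearIndependent ℝ ![ξ1, ξ2]) (w : Fin 3 → ℝ)
    (hwunit : dot w w = 1)
    (hwspan : w ∈ Submodule.span ℝ ({ξ1, ξ2} : Set (Fin 3 → ℝ)))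
    (hw2 : dot w ξ2 = 0) (hw1 : 0 ≤ dot w ξ1) :
    kPSP lam mu A B ξ1 ξ2 w =
      (lam + 2 * B + 3 * mu + A) * dot ξ1 ξ1 * nrm ξ2
        * dot (ξ1 + ξ2) (ξ1 + ξ2)
        * Real.cos (Real.arccos (dot ξ1 ξ2 / (nrm ξ1 * nrm ξ2))
            - Real.arccos (dot (ξ1 + ξ2) ξ2 / (nrm (ξ1 + ξ2) * nrm ξ2)))
        * Real.sin (Real.arccos (dot ξ1 ξ2 / (nrm ξ1 * nrm ξ2))
            + Real.arccos (dot (ξ1 + ξ2) ξ2 / (nrm (ξ1 + ξ2) * nrm ξ2))) := by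
  -- names
  set p := dot ξ1 ξ1 with hp
  set q := dot ξ1 ξ2 with hq
  set r := dot ξ2 ξ2 with hr
  set s := dot w ξ1 with hs
  -- nonzero vectors
  have h12 := linearIndependent_fin2.mp hind
  have hξ2 : ξ2 ≠ 0 := by
    have := hind.ne_zero 1; simpa using this
  have hξ1 : ξ1 ≠ 0 := by
    have := hind.ne_zero 0; simpa using this
  have hξP : ξ1 + ξ2 ≠ 0 := by
    intro h
    apply h12.2 (-1)
    show (-1 : ℝ) • ξ2 = ξ1
    have h1 : ξ1 = -ξ2 := eq_neg_of_add_eq_zero_left h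
    rw [h1, neg_one_smul]
  have hppos : 0 < p := dot_self_pos hξ1
  have hrpos : 0 < r := dot_self_pos hξ2
  have hPdot : dot (ξ1 + ξ2) (ξ1 + ξ2) = p + 2*q + r := by
    rw [dot_add_left, dot_add_right, dot_add_right, hp, hr, ← hq, dot_comm' ξ2 ξ1, ← hq]; ring
  have hPpos : 0 < p + 2*q + r := by
    have := dot_self_pos hξP; rwa [hPdot] at this
  -- span decomposition
  rw [Submodule.mem_span_pair] at hwspan
  obtain ⟨a, b, hab⟩ := hwspan
  -- key relation s^2 * r = p*r - q^2
  have hwξ1 : s = a * p + b * q := by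
    rw [hs]
    conv_lhs => rw [← hab]
    rw [dot_add_left, dot_smul_left, dot_smul_left, dot_comm' ξ2 ξ1, ← hp, ← hq]
  have hwξ2 : a * q + b * r = 0 := by
    rw [← hw2]
    conv_rhs => rw [← hab]
    rw [dot_add_left, dot_smul_left, dot_smul_left, ← hq, ← hr]
  have haswone : a * s = 1 := by
    have h1 : dot w w = a * s := by
      nth_rewrite 1 [← hab]
      rw [dot_add_left, dot_smul_left, dot_smul_left, dot_comm' ξ1 w, dot_comm' ξ2 w,
        hw2, ← hs]
      ring
    rw [hwunit] at h1
    linarith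
  have hkey : s^2 * r = p * r - q^2 := by
    have h1 : s * r = a * (p*r - q^2) := by
      have : b * r = -(a * q) := by linarith
      calc s * r = (a*p + b*q) * r := by rw [hwξ1]
        _ = a*p*r + q * (b*r) := by ring
        _ = a*p*r + q * (-(a*q)) := by rw [this]
        _ = a * (p*r - q^2) := by ring
    calc s^2 * r = s * (s * r) := by ring
      _ = s * (a * (p*r - q^2)) := by rw [h1]
      _ = (a * s) * (p*r - q^2) := by ring
      _ = p*r - q^2 := by rw [haswone]; ring
  have hs2 : s^2 = (p*r - q^2)/r := by
    field_simp
    linarith [hkey]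
  -- sqrt values
  have hnrm1 : nrm ξ1 = Real.sqrt p := rfl
  have hnrm2 : nrm ξ2 = Real.sqrt r := rfl
  have hnrmP : nrm (ξ1 + ξ2) = Real.sqrt (p + 2*q + r) := by
    rw [nrm, hPdot]
  set sp := Real.sqrt p with hsp
  set sr := Real.sqrt r with hsr
  set sP := Real.sqrt (p + 2*q + r) with hsP
  have hsppos : 0 < sp := Real.sqrt_pos.mpr hppos
  have hsrpos : 0 < sr := Real.sqrt_pos.mpr hrpos
  have hsPpos : 0 < sP := Real.sqrt_pos.mpr hPpos
  have hsp2 : sp^2 = p := Real.sq_sqrt hppos.le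
  have hsr2 : sr^2 = r := Real.sq_sqrt hrpos.le
  have hsP2 : sP^2 = p + 2*q + r := Real.sq_sqrt hPpos.le
  -- Cauchy-Schwarz type bounds
  have hq2le : q^2 ≤ p * r := by nlinarith [sq_nonneg s, hkey, hrpos]
  have hcs1 : -1 ≤ q / (sp * sr) ∧ q / (sp * sr) ≤ 1 := by
    have hden : 0 < sp * sr := mul_pos hsppos hsrpos
    have habs : |q| ≤ sp * sr := by
      rw [← Real.sqrt_sq_eq_abs, ← Real.sqrt_sq hden.le]
      apply Real.sqrt_le_sqrt
      rw [mul_pow, hsp2, hsr2]; exact hq2le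
    obtain ⟨hA, hB⟩ := abs_le.mp habs
    constructor
    · rw [le_div_iff₀ hden]; linarith
    · rw [div_le_one hden]; linarith
  have hqr2le : (q + r)^2 ≤ (p + 2*q + r) * r := by nlinarith [sq_nonneg s, hkey, hrpos]
  have hcs2 : -1 ≤ (q + r) / (sP * sr) ∧ (q + r) / (sP * sr) ≤ 1 := by
    have hden : 0 < sP * sr := mul_pos hsPpos hsrpos
    have habs : |q + r| ≤ sP * sr := by
      rw [← Real.sqrt_sq_eq_abs, ← Real.sqrt_sq hden.le]
      apply Real.sqrt_le_sqrt
      rw [mul_pow, hsP2, hsr2]; exact hqr2le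
    obtain ⟨hA, hB⟩ := abs_le.mp habs
    constructor
    · rw [le_div_iff₀ hden]; linarith
    · rw [div_le_one hden]; linarith
  -- the dot products appearing
  have hd1 : dot (ξ1 + ξ2) ξ2 = q + r := by
    rw [dot_add_left, ← hq, ← hr]
  have hd2 : dot ξ1 (ξ1 + ξ2) = p + q := by
    rw [dot_add_right, ← hp, ← hq]
  have hd3 : dot (ξ1 + ξ2) w = s := by
    rw [dot_comm' (ξ1+ξ2) w, dot_add_right, hw2, ← hs, add_zero]
  have hd4 : dot ξ1 w = s := by rw [dot_comm', ← hs]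
  -- trig values
  rw [hnrm1, hnrm2, hnrmP, hd1, hPdot,
    Real.cos_sub, Real.sin_add,
    Real.cos_arccos hcs1.1 hcs1.2, Real.cos_arccos hcs2.1 hcs2.2,
    Real.sin_arccos, Real.sin_arccos]
  have hsinα : Real.sqrt (1 - (q / (sp * sr))^2) = s / sp := by
    rw [show (1 : ℝ) - (q / (sp * sr))^2 = (s/sp)^2 by
      rw [div_pow, div_pow, mul_pow, hsp2, hsr2, hs2]
      field_simp]
    exact Real.sqrt_sq (by positivity)
  have hsinψ : Real.sqrt (1 - ((q + r) / (sP * sr))^2) = s / sP := by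
    rw [show (1 : ℝ) - ((q+r) / (sP * sr))^2 = (s/sP)^2 by
      rw [div_pow, div_pow, mul_pow, hsP2, hsr2, hs2]
      field_simp
      have h0 : p + q * 2 + r ≠ 0 := ne_of_gt (by linarith)
      field_simp
      ring]
    exact Real.sqrt_sq (by positivity)
  rw [hsinα, hsinψ]
  -- LHS
  rw [kPSP, hd1, hd2, hd3, hd4, hPdot, ← hp, ← hq]
  have hLHS : (lam + 2 * B) * (p * (q + r) * s + q * s * (p + 2*q + r))
      + (3 * mu + A) * ((q + r) * (p + q) * s + s * (p + q) * q)
      = (lam + 2*B + 3*mu + A) * s * (p + q) * (2*q + r) := by ring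
  rw [hLHS]
  -- RHS algebra
  have hr' : sr ≠ 0 := hsrpos.ne'
  have hp' : sp ≠ 0 := hsppos.ne'
  have hP' : sP ≠ 0 := hsPpos.ne'
  have e1 : q/(sp*sr) * ((q+r)/(sP*sr)) + s/sp * (s/sP) = (p+q)/(sp*sP) := by
    field_simp
    linear_combination (s^2-p-q)*hsr2 + hkey
  have e2 : s/sp * ((q+r)/(sP*sr)) + q/(sp*sr) * (s/sP) = s*(2*q+r)/(sp*sP*sr) := by
    field_simp
    ring
  rw [e1, e2]
  field_simp
  linear_combination ((lam+2*B+3*mu+A)*s*(p+q)*(2*q+r)*sP^2)*hsp2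
    + ((lam+2*B+3*mu+A)*s*(p+q)*(2*q+r)*p)*hsP2
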